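/- Let p, q ∈ (0,1) with p + q ≤ 1 and p ≤ q, and let λ_± = p + q − 2pq ± 2√(pq(1−p)(1−q)). Then ∫_{λ_−}^{λ_+} √((λ_+ − x)(x − λ_−)) / (2π x(1−x)) dx = p, so that f_M(x)dx = (1−p)δ₀ + (√((λ_+−x)(x−λ_−))/(2πx(1−x)))·1_{[λ_−,λ_+]}(x)dx is a probability measure. -/

import Mathlib

open Real

noncomputable def Aterm (a b x : ℝ) : ℝ :=
  Real.sqrt (a * b) * Real.arcsin ((2 * (a * b) - (a + b) * x) / (x * (b - a)))

lemma evalA_left {a b : ℝ} (ha : 0 ≤ a) (hab : a < b) :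
    Aterm a b a = Real.sqrt (a * b) * (Real.pi / 2) := by
  rcases eq_or_lt_of_le ha with h | h
  · simp [Aterm, ← h]
  · have ha0 : a ≠ 0 := ne_of_gt h
    have hba : b - a ≠ 0 := by intro hc; linarith [hc]
    have harg : (2 * (a * b) - (a + b) * a) / (a * (b - a)) = 1 := by
      rw [div_eq_one_iff_eq (by exact mul_ne_zero ha0 hba)]
      ring
    rw [Aterm, harg, Real.arcsin_one]

lemma evalA_right {a b : ℝ} (ha : 0 ≤ a) (hab : a < b) :
    Aterm a b b = -(Real.sqrt (a * b) * (Real.pi / 2)) := by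
  rcases eq_or_lt_of_le ha with h | h
  · simp [Aterm, ← h]
  · have hb0 : b ≠ 0 := ne_of_gt (lt_trans h hab)
    have hba : b - a ≠ 0 := by intro hc; linarith [hc]
    have harg : (2 * (a * b) - (a + b) * b) / (b * (b - a)) = -1 := by
      rw [div_eq_iff (mul_ne_zero hb0 hba)]
      ring
    rw [Aterm, harg, Real.arcsin_neg_one]
    ring

lemma contA {a b : ℝ} (ha : 0 ≤ a) (hab : a < b) :
    ContinuousOn (fun x => Aterm a b x) (Set.Icc a b) := by
  rcases eq_or_lt_of_le ha with h | h
  · have hfun : (fun x => Aterm a b x) = fun _ => (0 : ℝ) := by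
      funext x; simp [Aterm, ← h]
    rw [hfun]; exact continuousOn_const
  · apply ContinuousOn.mul continuousOn_const
    apply Real.continuous_arcsin.comp_continuousOn
    apply ContinuousOn.div
    · fun_prop
    · fun_prop
    · intro x hx
      have hx0 : 0 < x := lt_of_lt_of_le h hx.1
      have hba : 0 < b - a := by linarith
      positivity

lemma hasDerivAt_theta {a b x : ℝ} (hab : a < b) (hx : x ∈ Set.Ioo a b) :
    HasDerivAt (fun y => Real.arcsin ((2 * y - a - b) / (b - a)))
      (1 / Real.sqrt ((b - x) * (x - a))) x := by
  obtain ⟨hax, hxb⟩ := hx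
  have hba : (0:ℝ) < b - a := by linarith
  have hSp : (0:ℝ) < (b - x) * (x - a) := by nlinarith
  have hS : 0 < Real.sqrt ((b - x) * (x - a)) := Real.sqrt_pos.mpr hSp
  have hu1 : (2 * x - a - b) / (b - a) < 1 := by
    rw [div_lt_one hba]; linarith
  have hu2 : -1 < (2 * x - a - b) / (b - a) := by
    rw [lt_div_iff₀ hba]; linarith
  have hinner : HasDerivAt (fun y : ℝ => (2 * y - a - b) / (b - a)) (2 / (b - a)) x := by
    have h1 : HasDerivAt (fun y : ℝ => 2 * y - a - b) 2 x := by
      simpa using (((hasDerivAt_id x).const_mul 2).sub_const a).sub_const b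
    exact h1.div_const (b - a)
  have harc := (Real.hasDerivAt_arcsin (ne_of_gt hu2) (ne_of_lt hu1)).comp x hinner
  have he : 1 - ((2 * x - a - b) / (b - a)) ^ 2
      = (2 / (b - a)) ^ 2 * ((b - x) * (x - a)) := by
    field_simp; ring
  have he2 : Real.sqrt (1 - ((2 * x - a - b) / (b - a)) ^ 2)
      = 2 / (b - a) * Real.sqrt ((b - x) * (x - a)) := by
    rw [he, Real.sqrt_mul (by positivity), Real.sqrt_sq (by positivity)]
  refine harc.congr_deriv ?_
  rw [he2]
  field_simp

lemma hasDerivAt_A {a b x : ℝ} (ha : 0 ≤ a) (hab : a < b) (hx : x ∈ Set.Ioo a b) :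
    HasDerivAt (fun y => Aterm a b y)
      (-(a * b) / (x * Real.sqrt ((b - x) * (x - a)))) x := by
  obtain ⟨hax, hxb⟩ := hx
  have hx0 : 0 < x := lt_of_le_of_lt ha hax
  have hba : (0:ℝ) < b - a := by linarith
  have hSp : (0:ℝ) < (b - x) * (x - a) := by nlinarith
  have hS : 0 < Real.sqrt ((b - x) * (x - a)) := Real.sqrt_pos.mpr hSp
  rcases eq_or_lt_of_le ha with h | h
  · have hfun : (fun y => Aterm a b y) = fun _ => (0 : ℝ) := by
      funext y; simp [Aterm, ← h]
    have hval : -(a * b) / (x * Real.sqrt ((b - x) * (x - a))) = 0 := by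
      rw [← h]; simp
    rw [hfun, hval]; exact hasDerivAt_const x 0
  · have hb0 : 0 < b := lt_trans h hab
    have habp : 0 < a * b := mul_pos h hb0
    have ht : Real.sqrt (a * b) ^ 2 = a * b := Real.sq_sqrt habp.le
    have hs2 : Real.sqrt ((b - x) * (x - a)) ^ 2 = (b - x) * (x - a) := Real.sq_sqrt hSp.le
    have hden : x * (b - a) ≠ 0 := by positivity
    have hinner : HasDerivAt (fun y : ℝ => (2 * (a * b) - (a + b) * y) / (y * (b - a)))
        (-(2 * (a * b)) / (x ^ 2 * (b - a))) x := by
      have h1 : HasDerivAt (fun y : ℝ => 2 * (a * b) - (a + b) * y) (-(a + b)) x := by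
        simpa using ((hasDerivAt_id x).const_mul (a + b)).const_sub (2 * (a * b))
      have h2 : HasDerivAt (fun y : ℝ => y * (b - a)) (b - a) x := by
        simpa using (hasDerivAt_id x).mul_const (b - a)
      have := h1.div h2 hden
      refine this.congr_deriv ?_
      field_simp
      ring
    have hkey : 1 - ((2 * (a * b) - (a + b) * x) / (x * (b - a))) ^ 2
        = (2 * Real.sqrt (a * b) * Real.sqrt ((b - x) * (x - a)) / (x * (b - a))) ^ 2 := by
      have hr : (2 * Real.sqrt (a * b) * Real.sqrt ((b - x) * (x - a)) / (x * (b - a))) ^ 2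
          = 4 * (a * b) * ((b - x) * (x - a)) / (x * (b - a)) ^ 2 := by
        rw [div_pow, mul_pow, mul_pow, ht, hs2]; ring
      rw [hr]
      field_simp
      ring
    have hupos : (0:ℝ) < 2 * Real.sqrt (a * b) * Real.sqrt ((b - x) * (x - a)) / (x * (b - a)) := by
      positivity
    have hne1 : (2 * (a * b) - (a + b) * x) / (x * (b - a)) ≠ -1 := by
      intro hc
      rw [hc] at hkey
      nlinarith [hkey, hupos]
    have hne2 : (2 * (a * b) - (a + b) * x) / (x * (b - a)) ≠ 1 := by
      intro hc
      rw [hc] at hkey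
      nlinarith [hkey, hupos]
    have harc := ((Real.hasDerivAt_arcsin hne1 hne2).comp x hinner).const_mul
      (Real.sqrt (a * b))
    have hsqrt : Real.sqrt (1 - ((2 * (a * b) - (a + b) * x) / (x * (b - a))) ^ 2)
        = 2 * Real.sqrt (a * b) * Real.sqrt ((b - x) * (x - a)) / (x * (b - a)) := by
      rw [hkey, Real.sqrt_sq hupos.le]
    have hSne : Real.sqrt ((b - x) * (x - a)) ≠ 0 := ne_of_gt hS
    have htne : Real.sqrt (a * b) ≠ 0 := by positivity
    refine harc.congr_deriv ?_
    rw [hsqrt]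
    field_simp

lemma integrable_density {a b : ℝ} (ha : 0 ≤ a) (hab : a < b) (hb1 : b ≤ 1) :
    IntervalIntegrable
      (fun x => Real.sqrt ((b - x) * (x - a)) / (2 * Real.pi * x * (1 - x)))
      MeasureTheory.volume a b := by
  set m := (a + b) / 2 with hm
  have ham : a < m := by rw [hm]; linarith
  have hmb : m < b := by rw [hm]; linarith
  have hm0 : 0 < m := lt_of_le_of_lt ha ham
  have hm1 : m < 1 := lt_of_lt_of_le hmb hb1
  have hmeas : ∀ u v : ℝ, MeasureTheory.AEStronglyMeasurable
      (fun x => Real.sqrt ((b - x) * (x - a)) / (2 * Real.pi * x * (1 - x)))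
      (MeasureTheory.volume.restrict (Set.uIoc u v)) := by
    intro u v
    apply Measurable.aestronglyMeasurable
    fun_prop
  have p1 : IntervalIntegrable
      (fun x => Real.sqrt ((b - x) * (x - a)) / (2 * Real.pi * x * (1 - x)))
      MeasureTheory.volume a m := by
    have hg : IntervalIntegrable
        (fun x => Real.sqrt (b - a) / (2 * Real.pi * (1 - m)) * (x - a) ^ (-(1/2) : ℝ))
        MeasureTheory.volume a m := by
      have h0 := (intervalIntegral.intervalIntegrable_rpow'
        (a := 0) (b := m - a) (r := -(1/2)) (by norm_num)).comp_sub_right a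
      have h1 := h0.const_mul (Real.sqrt (b - a) / (2 * Real.pi * (1 - m)))
      simpa using h1
    apply hg.mono_fun (hmeas a m)
    filter_upwards [MeasureTheory.ae_restrict_mem measurableSet_uIoc] with x hx
    rw [Set.uIoc_of_le ham.le] at hx
    obtain ⟨hax, hxm⟩ := hx
    have hx0 : 0 < x := lt_of_le_of_lt ha hax
    have hx1 : x < 1 := lt_of_le_of_lt hxm hm1
    have hxa : 0 < x - a := by linarith
    have hsx : 0 < Real.sqrt (x - a) := Real.sqrt_pos.mpr hxa
    have hba : (0:ℝ) < b - a := by linarith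
    have hrw : (x - a) ^ (-(1/2) : ℝ) = 1 / Real.sqrt (x - a) := by
      rw [Real.rpow_neg hxa.le, ← Real.sqrt_eq_rpow, one_div]
    have h1x0 : 0 < 1 - x := by linarith
    have h1m0 : 0 < 1 - m := by linarith
    have hden : 0 < 2 * Real.pi * x * (1 - x) :=
      mul_pos (mul_pos (mul_pos two_pos Real.pi_pos) hx0) h1x0
    have hden2 : 0 < 2 * Real.pi * (x - a) * (1 - m) :=
      mul_pos (mul_pos (mul_pos two_pos Real.pi_pos) hxa) h1m0
    have hc0 : 0 < 2 * Real.pi * (1 - m) :=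
      mul_pos (mul_pos two_pos Real.pi_pos) h1m0
    rw [Real.norm_of_nonneg (div_nonneg (Real.sqrt_nonneg _) hden.le),
      Real.norm_of_nonneg (mul_nonneg (div_nonneg (Real.sqrt_nonneg _) hc0.le)
        (Real.rpow_nonneg hxa.le _))]
    have hnum : Real.sqrt ((b - x) * (x - a)) ≤ Real.sqrt (b - a) * Real.sqrt (x - a) := by
      rw [← Real.sqrt_mul hba.le]
      apply Real.sqrt_le_sqrt
      nlinarith
    calc Real.sqrt ((b - x) * (x - a)) / (2 * Real.pi * x * (1 - x))
        ≤ Real.sqrt (b - a) * Real.sqrt (x - a) / (2 * Real.pi * (x - a) * (1 - m)) := by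
          apply div_le_div₀ (by positivity) hnum hden2
          have h1x : 1 - m ≤ 1 - x := by linarith
          have hxx : x - a ≤ x := by linarith
          nlinarith [Real.pi_pos, mul_le_mul hxx h1x h1m0.le hx0.le]
      _ = Real.sqrt (b - a) / (2 * Real.pi * (1 - m)) * ((x - a) ^ (-(1/2) : ℝ)) := by
          rw [hrw]
          field_simp
          linear_combination Real.mul_self_sqrt hxa.le
  have p2 : IntervalIntegrable
      (fun x => Real.sqrt ((b - x) * (x - a)) / (2 * Real.pi * x * (1 - x)))
      MeasureTheory.volume m b := by
    have hg : IntervalIntegrable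
        (fun x => Real.sqrt (b - a) / (2 * Real.pi * m) * (b - x) ^ (-(1/2) : ℝ))
        MeasureTheory.volume m b := by
      have h0 := ((intervalIntegral.intervalIntegrable_rpow'
        (a := 0) (b := b - m) (r := -(1/2)) (by norm_num)).comp_sub_left b).symm
      have h1 := h0.const_mul (Real.sqrt (b - a) / (2 * Real.pi * m))
      simpa using h1
    apply hg.mono_fun (hmeas m b)
    filter_upwards [MeasureTheory.ae_restrict_mem measurableSet_uIoc] with x hx
    rw [Set.uIoc_of_le hmb.le] at hx
    obtain ⟨hmx, hxb⟩ := hx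
    rcases eq_or_lt_of_le hxb with heq | hlt
    · subst heq
      simp only [sub_self, zero_mul, Real.sqrt_zero, zero_div, norm_zero]
      exact norm_nonneg _
    · have hx0 : 0 < x := lt_trans hm0 hmx
      have h1x0 : 0 < 1 - x := by linarith
      have hbx : 0 < b - x := by linarith
      have hsx : 0 < Real.sqrt (b - x) := Real.sqrt_pos.mpr hbx
      have hba : (0:ℝ) < b - a := by linarith
      have hrw : (b - x) ^ (-(1/2) : ℝ) = 1 / Real.sqrt (b - x) := by
        rw [Real.rpow_neg hbx.le, ← Real.sqrt_eq_rpow, one_div]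
      have hden : 0 < 2 * Real.pi * x * (1 - x) :=
        mul_pos (mul_pos (mul_pos two_pos Real.pi_pos) hx0) h1x0
      have hden2 : 0 < 2 * Real.pi * m * (b - x) :=
        mul_pos (mul_pos (mul_pos two_pos Real.pi_pos) hm0) hbx
      have hc0 : 0 < 2 * Real.pi * m :=
        mul_pos (mul_pos two_pos Real.pi_pos) hm0
      rw [Real.norm_of_nonneg (div_nonneg (Real.sqrt_nonneg _) hden.le),
        Real.norm_of_nonneg (mul_nonneg (div_nonneg (Real.sqrt_nonneg _) hc0.le)
          (Real.rpow_nonneg hbx.le _))]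
      have hnum : Real.sqrt ((b - x) * (x - a)) ≤ Real.sqrt (b - a) * Real.sqrt (b - x) := by
        rw [← Real.sqrt_mul hba.le]
        apply Real.sqrt_le_sqrt
        nlinarith
      calc Real.sqrt ((b - x) * (x - a)) / (2 * Real.pi * x * (1 - x))
          ≤ Real.sqrt (b - a) * Real.sqrt (b - x) / (2 * Real.pi * m * (b - x)) := by
            apply div_le_div₀ (by positivity) hnum hden2
            have h1x : b - x ≤ 1 - x := by linarith
            have hxx : m ≤ x := hmx.le
            nlinarith [Real.pi_pos, mul_le_mul hxx h1x hbx.le hx0.le]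
        _ = Real.sqrt (b - a) / (2 * Real.pi * m) * ((b - x) ^ (-(1/2) : ℝ)) := by
            rw [hrw]
            field_simp
            linear_combination Real.mul_self_sqrt hbx.le
  exact p1.trans p2

lemma manova_general {a b : ℝ} (ha : 0 ≤ a) (hab : a < b) (hb1 : b ≤ 1) :
    ∫ x in a..b, Real.sqrt ((b - x) * (x - a)) / (2 * Real.pi * x * (1 - x)) =
      (1 - Real.sqrt (a * b) - Real.sqrt ((1 - a) * (1 - b))) / 2 := by
  have ha' : (0:ℝ) ≤ 1 - b := by linarith
  have hab' : 1 - b < 1 - a := by linarith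
  have hba : (0:ℝ) < b - a := by linarith
  set H : ℝ → ℝ := fun x =>
    (Real.arcsin ((2 * x - a - b) / (b - a)) + Aterm a b x
      - Aterm (1 - b) (1 - a) (1 - x)) / (2 * Real.pi) with hH
  have hcont : ContinuousOn H (Set.Icc a b) := by
    apply ContinuousOn.div_const
    apply ContinuousOn.sub
    · apply ContinuousOn.add
      · apply Real.continuous_arcsin.comp_continuousOn
        apply ContinuousOn.div_const
        fun_prop
      · exact contA ha hab
    · apply (contA ha' hab').comp
        (by fun_prop : ContinuousOn (fun x : ℝ => 1 - x) (Set.Icc a b))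
      intro x hx
      have h1 := hx.1
      have h2 := hx.2
      simp only [Set.mem_Icc]
      constructor <;> linarith
  have hderiv : ∀ x ∈ Set.Ioo a b, HasDerivWithinAt H
      (Real.sqrt ((b - x) * (x - a)) / (2 * Real.pi * x * (1 - x))) (Set.Ioi x) x := by
    intro x hx
    obtain ⟨hax, hxb⟩ := hx
    have hx0 : 0 < x := lt_of_le_of_lt ha hax
    have hx1 : x < 1 := lt_of_lt_of_le hxb hb1
    have hSp : (0:ℝ) < (b - x) * (x - a) := by nlinarith
    have hS : 0 < Real.sqrt ((b - x) * (x - a)) := Real.sqrt_pos.mpr hSp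
    have hs2 : Real.sqrt ((b - x) * (x - a)) ^ 2 = (b - x) * (x - a) := Real.sq_sqrt hSp.le
    have D1 := hasDerivAt_theta hab ⟨hax, hxb⟩
    have D2 := hasDerivAt_A ha hab ⟨hax, hxb⟩
    have hneg : HasDerivAt (fun y : ℝ => 1 - y) (-1 : ℝ) x := by
      simpa using (hasDerivAt_id x).const_sub (1:ℝ)
    have hmem : (1 - x) ∈ Set.Ioo (1 - b) (1 - a) := ⟨by linarith, by linarith⟩
    have D3' := (hasDerivAt_A ha' hab' hmem).comp x hneg
    simp only [Function.comp_def] at D3'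
    have D3 : HasDerivAt (fun y => Aterm (1 - b) (1 - a) (1 - y))
        ((1 - b) * (1 - a) / ((1 - x) * Real.sqrt ((b - x) * (x - a)))) x := by
      refine D3'.congr_deriv ?_
      rw [show (1 - a - (1 - x)) * (1 - x - (1 - b)) = (b - x) * (x - a) from by ring]
      ring
    have D := ((D1.add D2).sub D3).div_const (2 * Real.pi)
    have heq : (1 / Real.sqrt ((b - x) * (x - a)) + -(a * b) / (x * Real.sqrt ((b - x) * (x - a)))
        - (1 - b) * (1 - a) / ((1 - x) * Real.sqrt ((b - x) * (x - a)))) / (2 * Real.pi)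
        = Real.sqrt ((b - x) * (x - a)) / (2 * Real.pi * x * (1 - x)) := by
      have hSne : Real.sqrt ((b - x) * (x - a)) ≠ 0 := ne_of_gt hS
      have hx1' : (1:ℝ) - x ≠ 0 := by linarith
      have hpi : Real.pi ≠ 0 := Real.pi_ne_zero
      field_simp
      linear_combination
        (-1 : ℝ) * hs2
    rw [← heq]
    exact D.hasDerivWithinAt
  have key := intervalIntegral.integral_eq_sub_of_hasDeriv_right_of_le hab.le hcont hderiv
    (integrable_density ha hab hb1)
  rw [key]
  simp only [hH]
  have e1 : (2 * b - a - b) / (b - a) = 1 := by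
    rw [show 2 * b - a - b = b - a from by ring]; exact div_self (ne_of_gt hba)
  have e2 : (2 * a - a - b) / (b - a) = -1 := by
    rw [show 2 * a - a - b = -(b - a) from by ring, neg_div, div_self (ne_of_gt hba)]
  have v1 := evalA_right ha hab
  have v2 := evalA_left ha hab
  have v3 : Aterm (1 - b) (1 - a) (1 - b) = Real.sqrt ((1 - a) * (1 - b)) * (Real.pi / 2) := by
    rw [evalA_left ha' hab', mul_comm (1 - b) (1 - a)]
  have v4 : Aterm (1 - b) (1 - a) (1 - a) = -(Real.sqrt ((1 - a) * (1 - b)) * (Real.pi / 2)) := by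
    rw [evalA_right ha' hab', mul_comm (1 - b) (1 - a)]
  rw [e1, e2, Real.arcsin_one, Real.arcsin_neg_one, v1, v2, v3, v4]
  have hpi : Real.pi ≠ 0 := Real.pi_ne_zero
  field_simp
  ring

/-- The absolutely continuous part of the MANOVA density integrates to `p` when
`p ≤ q` and `p + q ≤ 1`, so that `f_M` is a probability measure. -/
theorem manova_density_integrates_to_p (p q : ℝ)
    (hp : p ∈ Set.Ioo (0 : ℝ) 1) (hq : q ∈ Set.Ioo (0 : ℝ) 1)
    (hpq : p + q ≤ 1) (hple : p ≤ q) :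
    ∫ x in (p + q - 2 * p * q - 2 * Real.sqrt (p * q * (1 - p) * (1 - q)))..(p +
        q - 2 * p * q + 2 * Real.sqrt (p * q * (1 - p) * (1 - q))),
      Real.sqrt ((p + q - 2 * p * q + 2 * Real.sqrt (p * q * (1 - p) * (1 - q)) - x) *
          (x - (p + q - 2 * p * q - 2 * Real.sqrt (p * q * (1 - p) * (1 - q))))) /
        (2 * Real.pi * x * (1 - x)) = p := by
  obtain ⟨hp0, hp1⟩ := hp
  obtain ⟨hq0, hq1⟩ := hq
  set d : ℝ := Real.sqrt (p * q * (1 - p) * (1 - q)) with hd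
  have hdprod : 0 < p * q * (1 - p) * (1 - q) :=
    mul_pos (mul_pos (mul_pos hp0 hq0) (by linarith)) (by linarith)
  have hd0 : 0 < d := Real.sqrt_pos.mpr hdprod
  have hd2 : d ^ 2 = p * q * (1 - p) * (1 - q) := Real.sq_sqrt hdprod.le
  set a : ℝ := p + q - 2 * p * q - 2 * d with ha_def
  set b : ℝ := p + q - 2 * p * q + 2 * d with hb_def
  have hs0 : 0 < p + q - 2 * p * q := by nlinarith
  have h1s : 0 < 1 - (p + q - 2 * p * q) := by nlinarith
  have hsq1 : (p + q - 2 * p * q) ^ 2 - (2 * d) ^ 2 = (p - q) ^ 2 := by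
    linarith [hd2]
  have hsq2 : (1 - (p + q - 2 * p * q)) ^ 2 - (2 * d) ^ 2 = (1 - p - q) ^ 2 := by
    linarith [hd2]
  have ha : 0 ≤ a := by
    rw [ha_def]
    nlinarith [hsq1, sq_nonneg (p - q), hd0, hs0]
  have hab : a < b := by
    rw [ha_def, hb_def]
    linarith [hd0]
  have hb1 : b ≤ 1 := by
    rw [hb_def]
    nlinarith [hsq2, sq_nonneg (1 - p - q), hd0, h1s]
  have hab2 : a * b = (q - p) ^ 2 := by
    rw [ha_def, hb_def]
    nlinarith [hd2]
  have hcd2 : (1 - a) * (1 - b) = (1 - p - q) ^ 2 := by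
    rw [ha_def, hb_def]
    nlinarith [hd2]
  rw [manova_general ha hab hb1, hab2, hcd2,
    Real.sqrt_sq (by linarith : (0:ℝ) ≤ q - p),
    Real.sqrt_sq (by linarith : (0:ℝ) ≤ 1 - p - q)]
  ring
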